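/- Let q be a prime power, l ≥ 1, t = q^l, and F = GF(t²) (so GF(q) ⊆ GF(t) ⊆ F). Let L = (α₁, …, αₙ) enumerate the set {α ∈ F : α ≠ 0 and α^{t−1} + 1 ≠ 0}. Then the q-ary Goppa codes Γ(L, (X^t + X)^{q−1}) and Γ(L, (X^{t−1} + 1)^{q−1}) coincide; that is, for every c ∈ GF(q)ⁿ, (X^{t−1} + 1)^{q−1} divides Σᵢ cᵢ ∏_{j≠i}(X − αⱼ) in F[X] if and only if (X^t + X)^{q−1} divides Σᵢ cᵢ ∏_{j≠i}(X − αⱼ) in F[X]. -/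

import Mathlib

open Polynomial

open Finset


/-- Bezout: `X - C β` is coprime to any `g` with `g.eval β ≠ 0`. -/
lemma isCoprime_X_sub_C_of_eval_ne {F : Type*} [Field F] {β : F} {g : F[X]}
    (h : g.eval β ≠ 0) : IsCoprime (X - C β) g := by
  have hmod : (X - C β) * (g /ₘ (X - C β)) = g - C (g.eval β) := by
    have h1 := modByMonic_add_div g (X - C β)
    have h2 := modByMonic_X_sub_C_eq_C_eval g β
    rw [h2] at h1; linear_combination h1
  refine ⟨-C (g.eval β)⁻¹ * (g /ₘ (X - C β)), C (g.eval β)⁻¹, ?_⟩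
  have hC : C (g.eval β)⁻¹ * C (g.eval β) = 1 := by
    rw [← C_mul, inv_mul_cancel₀ h, C_1]
  calc -C (g.eval β)⁻¹ * (g /ₘ (X - C β)) * (X - C β) + C (g.eval β)⁻¹ * g
      = C (g.eval β)⁻¹ * (g - (X - C β) * (g /ₘ (X - C β))) := by ring
    _ = C (g.eval β)⁻¹ * C (g.eval β) := by rw [hmod]; ring_nf
    _ = 1 := hC

/-- Local moment criterion: `(X-γ)^m` divides the syndrome iff the first `m`
inverse-power moments at `γ` vanish. -/
lemma moment_crit {F : Type*} [Field F] {n : ℕ} (α : Fin n → F) (d : Fin n → F)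
    (γ : F) (hγ : ∀ i, α i ≠ γ) (m : ℕ) :
    ((X - C γ) ^ m ∣ ∑ i, C (d i) * ∏ j ∈ univ.erase i, (X - C (α j)))
      ↔ ∀ k, 1 ≤ k → k ≤ m → ∑ i, d i * ((α i - γ)⁻¹) ^ k = 0 := by
  set S : F[X] := ∑ i, C (d i) * ∏ j ∈ univ.erase i, (X - C (α j)) with hS
  have hne : ∀ i, α i - γ ≠ 0 := fun i => sub_ne_zero_of_ne (hγ i)
  -- per-i telescoping identity
  have hper : ∀ (i : Fin n) (M : ℕ),
      (X - C (α i)) * (-∑ r ∈ range M, C (((α i - γ)⁻¹) ^ (r + 1)) * (X - C γ) ^ r)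
        = 1 - C (((α i - γ)⁻¹) ^ M) * (X - C γ) ^ M := by
    intro i M
    set a : F := α i - γ with ha
    have ha0 : a ≠ 0 := hne i
    have hsum : (∑ r ∈ range M, C ((a⁻¹) ^ (r + 1)) * (X - C γ) ^ r)
        = C a⁻¹ * ∑ r ∈ range M, (C a⁻¹ * (X - C γ)) ^ r := by
      rw [mul_sum]
      refine sum_congr rfl fun r _ => ?_
      rw [mul_pow, pow_succ', C_mul, C_pow]; ring
    have hXa : X - C (α i) = (X - C γ) - C a := by
      rw [ha, C_sub]; ring
    rw [hsum, hXa]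
    have hgeom := geom_sum_mul (C a⁻¹ * (X - C γ)) M
    have hCa : C a⁻¹ * C a = 1 := by rw [← C_mul, inv_mul_cancel₀ ha0, C_1]
    calc ((X - C γ) - C a) * -(C a⁻¹ * ∑ r ∈ range M, (C a⁻¹ * (X - C γ)) ^ r)
        = -((C a⁻¹ * (X - C γ) - C a⁻¹ * C a) * ∑ r ∈ range M, (C a⁻¹ * (X - C γ)) ^ r) := by
          ring
      _ = -((C a⁻¹ * (X - C γ) - 1) * ∑ r ∈ range M, (C a⁻¹ * (X - C γ)) ^ r) := by rw [hCa]
      _ = -((C a⁻¹ * (X - C γ)) ^ M - 1) := by rw [mul_comm (C a⁻¹ * (X - C γ) - 1), hgeom]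
      _ = 1 - C ((a⁻¹) ^ M) * (X - C γ) ^ M := by rw [mul_pow, C_pow]; ring
  -- global identity
  have key : ∀ M : ℕ,
      S = (∏ j, (X - C (α j))) *
            (-∑ r ∈ range M, C (∑ i, d i * ((α i - γ)⁻¹) ^ (r + 1)) * (X - C γ) ^ r)
          + (X - C γ) ^ M * ∑ i, C (d i * ((α i - γ)⁻¹) ^ M) * ∏ j ∈ univ.erase i, (X - C (α j)) := by
    intro M
    have hterm : ∀ i : Fin n, C (d i) * ∏ j ∈ univ.erase i, (X - C (α j))
        = (∏ j, (X - C (α j))) *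
            (C (d i) * (-∑ r ∈ range M, C (((α i - γ)⁻¹) ^ (r + 1)) * (X - C γ) ^ r))
          + (X - C γ) ^ M * (C (d i * ((α i - γ)⁻¹) ^ M) * ∏ j ∈ univ.erase i, (X - C (α j))) := by
      intro i
      have hprod : (∏ j, (X - C (α j)))
          = (X - C (α i)) * ∏ j ∈ univ.erase i, (X - C (α j)) :=
        (mul_prod_erase univ _ (mem_univ i)).symm
      rw [hprod]
      have := hper i M
      calc C (d i) * ∏ j ∈ univ.erase i, (X - C (α j))
          = C (d i) * (∏ j ∈ univ.erase i, (X - C (α j))) *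
              ((X - C (α i)) * (-∑ r ∈ range M, C (((α i - γ)⁻¹) ^ (r + 1)) * (X - C γ) ^ r)
                + C (((α i - γ)⁻¹) ^ M) * (X - C γ) ^ M) := by
            rw [this]; ring
        _ = _ := by rw [C_mul]; ring
    rw [hS]
    calc (∑ i, C (d i) * ∏ j ∈ univ.erase i, (X - C (α j)))
        = ∑ i, ((∏ j, (X - C (α j))) *
            (C (d i) * (-∑ r ∈ range M, C (((α i - γ)⁻¹) ^ (r + 1)) * (X - C γ) ^ r))
          + (X - C γ) ^ M * (C (d i * ((α i - γ)⁻¹) ^ M) * ∏ j ∈ univ.erase i, (X - C (α j)))) :=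
          sum_congr rfl fun i _ => hterm i
      _ = (∏ j, (X - C (α j))) *
            (∑ i, C (d i) * (-∑ r ∈ range M, C (((α i - γ)⁻¹) ^ (r + 1)) * (X - C γ) ^ r))
          + (X - C γ) ^ M * ∑ i, C (d i * ((α i - γ)⁻¹) ^ M) * ∏ j ∈ univ.erase i, (X - C (α j)) := by
          rw [sum_add_distrib, mul_sum, mul_sum]
      _ = _ := by
          congr 2
          calc (∑ i, C (d i) * (-∑ r ∈ range M, C (((α i - γ)⁻¹) ^ (r + 1)) * (X - C γ) ^ r))
              = ∑ i, ∑ r ∈ range M, -(C (d i * ((α i - γ)⁻¹) ^ (r + 1)) * (X - C γ) ^ r) := by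
                refine sum_congr rfl fun i _ => ?_
                rw [mul_neg, mul_sum, ← Finset.sum_neg_distrib]
                refine sum_congr rfl fun r _ => ?_
                rw [C_mul]; ring
            _ = ∑ r ∈ range M, ∑ i, -(C (d i * ((α i - γ)⁻¹) ^ (r + 1)) * (X - C γ) ^ r) :=
                sum_comm
            _ = -∑ r ∈ range M, C (∑ i, d i * ((α i - γ)⁻¹) ^ (r + 1)) * (X - C γ) ^ r := by
                rw [← Finset.sum_neg_distrib]
                refine sum_congr rfl fun r _ => ?_
                rw [Finset.sum_neg_distrib, map_sum, sum_mul]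
  
  have hUzero : ∀ M : ℕ, (∀ k, 1 ≤ k → k ≤ M → ∑ i, d i * ((α i - γ)⁻¹) ^ k = 0) →
      (-∑ r ∈ range M, C (∑ i, d i * ((α i - γ)⁻¹) ^ (r + 1)) * (X - C γ) ^ r) = (0 : F[X]) := by
    intro M hW
    have h0 : ∀ r ∈ range M, C (∑ i, d i * ((α i - γ)⁻¹) ^ (r + 1)) * (X - C γ) ^ r = (0 : F[X]) := by
      intro r hr
      rw [hW (r + 1) (by omega) (by have := mem_range.mp hr; omega), C_0, zero_mul]
    rw [sum_congr rfl h0, sum_const_zero, neg_zero]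
  constructor
  · induction m with
    | zero => intro _ k hk1 hk2; omega
    | succ m IH =>
      intro hdvd k hk1 hk2
      have hdvdm : (X - C γ) ^ m ∣ S := dvd_trans (pow_dvd_pow _ (Nat.le_succ m)) hdvd
      rcases Nat.lt_or_ge k (m + 1) with hk | hk
      · exact IH hdvdm k hk1 (by omega)
      · have hkm : k = m + 1 := by omega
        subst hkm
        have hU : (-∑ r ∈ range m, C (∑ i, d i * ((α i - γ)⁻¹) ^ (r + 1)) * (X - C γ) ^ r)
            = (0 : F[X]) := hUzero m (fun k h1 h2 => IH hdvdm k h1 h2)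
        have hSM : S = (X - C γ) ^ m *
            ∑ i, C (d i * ((α i - γ)⁻¹) ^ m) * ∏ j ∈ univ.erase i, (X - C (α j)) := by
          rw [key m, hU, mul_zero, zero_add]
        obtain ⟨w, hw⟩ := hdvd
        rw [hSM, pow_succ, mul_assoc] at hw
        have hV : (∑ i, C (d i * ((α i - γ)⁻¹) ^ m) * ∏ j ∈ univ.erase i, (X - C (α j)))
            = (X - C γ) * w :=
          mul_left_cancel₀ (pow_ne_zero m (X_sub_C_ne_zero γ)) hw
        have hev := congrArg (eval γ) hV
        rw [eval_mul, eval_sub, eval_X, eval_C, sub_self, zero_mul, eval_finset_sum] at hev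
        have hPi : ∀ i : Fin n, ∏ j ∈ univ.erase i, (γ - α j)
            = (γ - α i)⁻¹ * ∏ j, (γ - α j) := by
          intro i
          have h := mul_prod_erase univ (fun j => γ - α j) (mem_univ i)
          rw [← h, inv_mul_cancel_left₀ (sub_ne_zero_of_ne (Ne.symm (hγ i)))]
        have heval : (∑ i, eval γ (C (d i * ((α i - γ)⁻¹) ^ m) * ∏ j ∈ univ.erase i, (X - C (α j))))
            = -(∏ j, (γ - α j)) * ∑ i, d i * ((α i - γ)⁻¹) ^ (m + 1) := by
          rw [mul_sum]
          refine sum_congr rfl fun i _ => ?_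
          rw [eval_mul, eval_C, eval_prod]
          simp only [eval_sub, eval_X, eval_C]
          rw [hPi i]
          have : (γ - α i)⁻¹ = -((α i - γ)⁻¹) := by
            rw [← inv_neg, neg_sub]
          rw [this, pow_succ]
          ring
        rw [heval] at hev
        have hP : (∏ j, (γ - α j)) ≠ 0 :=
          prod_ne_zero_iff.mpr fun j _ => sub_ne_zero_of_ne (Ne.symm (hγ j))
        have := mul_eq_zero.mp hev
        rcases this with h | h
        · exact absurd h (by simpa using hP)
        · exact h
  · intro hW
    rw [key m, hUzero m hW, mul_zero, zero_add]
    exact dvd_mul_right _ _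

section
variable {F : Type*} [Field F] {n : ℕ}

/-- Global window lemma: if monic `g` (nonvanishing on the support) divides the
syndrome, then the moments `∑ᵢ dᵢ αᵢᵉ / g(αᵢ)` vanish for all `e < deg g`. -/
lemma moment_window (α : Fin n → F) (d : Fin n → F)
    (g : F[X]) (hg : g.Monic) (hD : 1 ≤ g.natDegree) (hne : ∀ i, g.eval (α i) ≠ 0)
    (hdvd : g ∣ ∑ i, C (d i) * ∏ j ∈ univ.erase i, (X - C (α j))) :
    ∀ e < g.natDegree, ∑ i, d i * (α i) ^ e * (g.eval (α i))⁻¹ = 0 := by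
  classical
  set D := g.natDegree with hDdef
  set qp : Fin n → F[X] := fun i => g /ₘ (X - C (α i)) with hqp
  have hqpid : ∀ i, (X - C (α i)) * qp i = g - C (g.eval (α i)) := by
    intro i
    have h1 := modByMonic_add_div g (X - C (α i))
    rw [modByMonic_X_sub_C_eq_C_eval] at h1
    linear_combination h1
  have hqpdeg : ∀ i, (qp i).natDegree = D - 1 := by
    intro i
    rw [hqp]
    simp [natDegree_divByMonic g (monic_X_sub_C (α i)), hDdef]
  set R : F[X] := ∑ i, C (d i * (g.eval (α i))⁻¹) * qp i with hR
  -- main identity : S = g * S₂ - h * R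
  have idS : (∑ i, C (d i) * ∏ j ∈ univ.erase i, (X - C (α j)))
      = g * (∑ i, C (d i * (g.eval (α i))⁻¹) * ∏ j ∈ univ.erase i, (X - C (α j)))
        - (∏ j, (X - C (α j))) * R := by
    rw [hR, mul_sum, mul_sum, ← sum_sub_distrib]
    refine sum_congr rfl fun i _ => ?_
    have hprod : (∏ j, (X - C (α j)))
        = (X - C (α i)) * ∏ j ∈ univ.erase i, (X - C (α j)) :=
      (mul_prod_erase univ _ (mem_univ i)).symm
    have hv : C (g.eval (α i)) * C (d i * (g.eval (α i))⁻¹) = C (d i) := by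
      rw [← C_mul]
      rw [mul_comm, mul_assoc, inv_mul_cancel₀ (hne i), mul_one]
    calc C (d i) * ∏ j ∈ univ.erase i, (X - C (α j))
        = C (g.eval (α i)) * C (d i * (g.eval (α i))⁻¹) * ∏ j ∈ univ.erase i, (X - C (α j)) := by
          rw [hv]
      _ = (g - (X - C (α i)) * qp i) * C (d i * (g.eval (α i))⁻¹)
            * ∏ j ∈ univ.erase i, (X - C (α j)) := by
          rw [hqpid i]; ring
      _ = g * (C (d i * (g.eval (α i))⁻¹) * ∏ j ∈ univ.erase i, (X - C (α j)))
          - (∏ j, (X - C (α j))) * (C (d i * (g.eval (α i))⁻¹) * qp i) := by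
          rw [hprod]; ring
  have hgdvdhR : g ∣ (∏ j, (X - C (α j))) * R := by
    have : (∏ j, (X - C (α j))) * R
        = g * (∑ i, C (d i * (g.eval (α i))⁻¹) * ∏ j ∈ univ.erase i, (X - C (α j)))
          - (∑ i, C (d i) * ∏ j ∈ univ.erase i, (X - C (α j))) := by
      rw [idS]; ring
    rw [this]
    exact dvd_sub (dvd_mul_right _ _) hdvd
  have hcop : IsCoprime (∏ j, (X - C (α j))) g :=
    IsCoprime.prod_left fun i _ => isCoprime_X_sub_C_of_eval_ne (hne i)
  have hgR : g ∣ R := (hcop.symm).dvd_of_dvd_mul_left hgdvdhR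
  have hdegR : R.degree < g.degree := by
    have h1 : R.degree ≤ ((D - 1 : ℕ) : WithBot ℕ) := by
      rw [hR]
      refine (degree_sum_le _ _).trans ?_
      refine Finset.sup_le fun i _ => ?_
      refine (degree_mul_le _ _).trans ?_
      have h2 : (C (d i * (g.eval (α i))⁻¹)).degree ≤ 0 := degree_C_le
      have h3 : (qp i).degree ≤ ((D - 1 : ℕ) : WithBot ℕ) :=
        (degree_le_natDegree).trans (by rw [hqpdeg i])
      calc (C (d i * (g.eval (α i))⁻¹)).degree + (qp i).degree
          ≤ 0 + ((D - 1 : ℕ) : WithBot ℕ) := add_le_add h2 h3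
        _ = ((D - 1 : ℕ) : WithBot ℕ) := by rw [zero_add]
    have h4 : g.degree = (D : WithBot ℕ) := degree_eq_natDegree hg.ne_zero
    rw [h4]
    refine lt_of_le_of_lt h1 ?_
    exact_mod_cast Nat.sub_lt (by omega) one_pos
  have hR0 : R = 0 := eq_zero_of_dvd_of_degree_lt hgR hdegR
  -- coefficient recurrence for qp
  have hrec : ∀ (i : Fin n) (j : ℕ), (qp i).coeff j = g.coeff (j + 1) + α i * (qp i).coeff (j + 1) := by
    intro i j
    have h := congrArg (fun p => coeff p (j + 1)) (hqpid i)
    simp only [coeff_sub, sub_mul, coeff_X_mul, coeff_C_mul, coeff_C, Nat.succ_ne_zero,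
      if_neg (Nat.succ_ne_zero j), sub_zero] at h
    norm_num at h
    linear_combination h
  -- closed form for high coefficients of qp
  have hcf : ∀ (i : Fin n) (e : ℕ), e < D →
      (qp i).coeff (D - 1 - e) = ∑ s ∈ range (e + 1), g.coeff (D - e + s) * (α i) ^ s := by
    intro i e
    induction e with
    | zero =>
      intro _
      have h0 : (qp i).coeff (D - 1) = g.coeff D + α i * (qp i).coeff D := by
        have := hrec i (D - 1)
        rwa [Nat.sub_add_cancel hD] at this
      have h1 : (qp i).coeff D = 0 :=
        coeff_eq_zero_of_natDegree_lt (by rw [hqpdeg i]; omega)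
      simp [h0, h1, hg.coeff_natDegree]
    | succ e IH =>
      intro he
      have hie := IH (by omega)
      have hstep : (qp i).coeff (D - 1 - (e + 1)) = g.coeff (D - 1 - e) + α i * (qp i).coeff (D - 1 - e) := by
        have := hrec i (D - 1 - (e + 1))
        have harith : D - 1 - (e + 1) + 1 = D - 1 - e := by omega
        rwa [harith] at this
      rw [hstep, hie]
      rw [Finset.sum_range_succ' (fun s => g.coeff (D - (e + 1) + s) * α i ^ s) (e + 1)]
      have harith2 : ∀ s : ℕ, s ∈ range (e + 1) →
          g.coeff (D - (e + 1) + (s + 1)) * α i ^ (s + 1)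
            = α i * (g.coeff (D - e + s) * α i ^ s) := by
        intro s _
        have : D - (e + 1) + (s + 1) = D - e + s := by omega
        rw [this, pow_succ]
        ring
      rw [sum_congr rfl harith2, ← mul_sum]
      have harith3 : D - (e + 1) + 0 = D - 1 - e := by omega
      rw [harith3, pow_zero, mul_one]
      ring
  -- extract moments by strong induction
  intro e
  induction e using Nat.strong_induction_on with
  | _ e IH =>
    intro he
    have hcoeff : R.coeff (D - 1 - e) = 0 := by rw [hR0, coeff_zero]
    rw [hR, finset_sum_coeff] at hcoeff
    have hx : ∀ i : Fin n, (C (d i * (g.eval (α i))⁻¹) * qp i).coeff (D - 1 - e)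
        = ∑ s ∈ range (e + 1), g.coeff (D - e + s) * (d i * (α i) ^ s * (g.eval (α i))⁻¹) := by
      intro i
      rw [coeff_C_mul, hcf i e he, mul_sum]
      exact sum_congr rfl fun s _ => by ring
    rw [sum_congr rfl fun i _ => hx i, sum_comm] at hcoeff
    have hcoeff2 : (∑ s ∈ range (e + 1), g.coeff (D - e + s) * ∑ i, d i * (α i) ^ s * (g.eval (α i))⁻¹) = 0 := by
      rw [← hcoeff]
      exact sum_congr rfl fun s _ => by rw [mul_sum]
    rw [Finset.sum_range_succ] at hcoeff2
    have hDe : D - e + e = D := by omega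
    rw [hDe, hg.coeff_natDegree, one_mul] at hcoeff2
    have hzero : (∑ s ∈ range e, g.coeff (D - e + s) * ∑ i, d i * (α i) ^ s * (g.eval (α i))⁻¹) = 0 := by
      refine sum_eq_zero fun s hs => ?_
      have hs' := mem_range.mp hs
      rw [IH s hs' (by omega), mul_zero]
    rw [hzero, zero_add] at hcoeff2
    exact hcoeff2

end


/-- The syndrome polynomial `Σᵢ cᵢ ∏_{j≠i} (X − αⱼ)` of a word `c ∈ GF(q)ⁿ` with respect to
the locator tuple `α`, with coefficients viewed in the extension field `F`. -/
noncomputable def goppaSum {K F : Type*} [Field K] [Field F] [Algebra K F] {n : ℕ}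
    (α : Fin n → F) (c : Fin n → K) : Polynomial F :=
  ∑ i, Polynomial.C (algebraMap K F (c i)) *
    ∏ j ∈ Finset.univ.erase i, (Polynomial.X - Polynomial.C (α j))

/-- with `t = q^l`, `F = GF(t²)` and `L` enumerating
`{α ∈ F : α ≠ 0 ∧ α^{t−1} + 1 ≠ 0}`, the codes `Γ(L, (X^t + X)^{q−1})` and
`Γ(L, (X^{t−1} + 1)^{q−1})` coincide. -/
theorem goppa_G2_eq_G1_pow_q_sub_one {K F : Type*} [Field K] [Fintype K]
    [Field F] [Fintype F] [Algebra K F]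
    (q l : ℕ) (hq : Fintype.card K = q) (hl : 1 ≤ l)
    (hF : Fintype.card F = (q ^ l) ^ 2)
    {n : ℕ} (α : Fin n → F) (hα : Function.Injective α)
    (hrange : ∀ x : F, x ∈ Set.range α ↔ (x ≠ 0 ∧ x ^ (q ^ l - 1) + 1 ≠ 0))
    (c : Fin n → K) :
    ((Polynomial.X ^ (q ^ l - 1) + 1) ^ (q - 1) ∣ goppaSum α c) ↔
      ((Polynomial.X ^ (q ^ l) + Polynomial.X) ^ (q - 1) ∣ goppaSum α c) := by
  classical
  set t := q ^ l with ht
  set g1 : F[X] := X ^ (t - 1) + 1 with hg1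
  -- numeric facts
  have hq2 : 2 ≤ q := hq ▸ Fintype.one_lt_card
  have hqt : q ≤ t := by
    calc q = q ^ 1 := (pow_one q).symm
      _ ≤ q ^ l := Nat.pow_le_pow_right (by omega) hl
  have ht2 : 2 ≤ t := le_trans hq2 hqt
  -- T = X * g1
  have hT : (X : F[X]) ^ t + X = X * g1 := by
    rw [hg1, mul_add, mul_one, ← pow_succ']
    congr 2
    omega
  have hg1T : g1 ∣ (X : F[X]) ^ t + X := by rw [hT]; exact dvd_mul_left g1 X
  constructor
  swap
  · -- backward direction: trivial divisor relation
    intro h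
    exact dvd_trans (pow_dvd_pow_of_dvd hg1T (q - 1)) h
  intro hyp
  -- characteristic setup
  set p := ringChar K with hp
  haveI hpK : CharP K p := ringChar.charP K
  obtain ⟨e, hpprime, hqe⟩ := FiniteField.card K p
  haveI : Fact p.Prime := ⟨hpprime⟩
  haveI hpF : CharP F p := charP_of_injective_algebraMap (algebraMap K F).injective p
  have hqval : q = p ^ (e : ℕ) := by rw [← hq, hqe]
  have htval : t = p ^ ((e : ℕ) * l) := by rw [ht, hqval, pow_mul]
  have hel : (e : ℕ) * l ≠ 0 := Nat.mul_ne_zero e.pos.ne' (by omega)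
  -- support facts
  set A : Fin n → F := fun i => algebraMap K F (c i) with hA
  have hα0 : ∀ i, α i ≠ 0 := fun i => ((hrange (α i)).1 ⟨i, rfl⟩).1
  have hαg : ∀ i, (α i) ^ (t - 1) + 1 ≠ 0 := fun i => ((hrange (α i)).1 ⟨i, rfl⟩).2
  have hSdef : goppaSum α c = ∑ i, C (A i) * ∏ j ∈ univ.erase i, (X - C (α j)) := rfl
  -- g1 basic
  have hg1monic : g1.Monic := by
    rw [hg1]
    refine monic_X_pow_add ?_
    rw [degree_one]
    exact_mod_cast Nat.sub_pos_of_lt ht2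
  have hg1deg : g1.natDegree = t - 1 := by
    rw [hg1, ← C_1, natDegree_X_pow_add_C]
  have hg1evalx : ∀ x : F, g1.eval x = x ^ (t - 1) + 1 := by
    intro x; rw [hg1]; simp
  -- roots of g1
  have hcard : Fintype.card F = t * t := by rw [hF, sq]
  have hcard1 : 1 < Fintype.card F := Fintype.one_lt_card
  have hbig_sep : ((X : F[X]) ^ Fintype.card F - X).Separable := by
    refine galois_poly_separable p (Fintype.card F) ?_
    rw [hcard, htval]
    exact dvd_mul_of_dvd_left (dvd_pow_self p hel) _
  have hbig_splits : Splits ((X : F[X]) ^ Fintype.card F - X) := by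
    rw [splits_iff_card_roots, FiniteField.roots_X_pow_card_sub_X,
      FiniteField.X_pow_card_sub_X_natDegree_eq F hcard1]
    simp
  have hbig_ne : ((X : F[X]) ^ Fintype.card F - X) ≠ 0 :=
    FiniteField.X_pow_card_sub_X_ne_zero F hcard1
  have hg1dvdbig : g1 ∣ (X : F[X]) ^ Fintype.card F - X := by
    have hTfrob : ((X : F[X]) ^ t + X) ^ t = X ^ (t * t) + X ^ t := by
      rw [htval, add_pow_char_pow, ← pow_mul, ← htval]
    have hfact : (X : F[X]) ^ Fintype.card F - X
        = ((X : F[X]) ^ t + X) * (((X : F[X]) ^ t + X) ^ (t - 1) - 1) := by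
      have h2 : ((X : F[X]) ^ t + X) ^ t
          = ((X : F[X]) ^ t + X) ^ (t - 1) * ((X : F[X]) ^ t + X) := by
        rw [← pow_succ]
        congr 1
        omega
      have h1 : ((X : F[X]) ^ t + X) * (((X : F[X]) ^ t + X) ^ (t - 1) - 1)
          = ((X : F[X]) ^ t + X) ^ t - ((X : F[X]) ^ t + X) := by
        rw [h2]; ring
      rw [h1, hTfrob, hcard]; ring
    rw [hfact]
    exact Dvd.dvd.mul_right hg1T _
  have hg1sep : g1.Separable := hbig_sep.of_dvd hg1dvdbig
  have hg1splits : Splits g1 :=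
    hbig_splits.of_dvd hbig_ne hg1dvdbig
  have hg1prodm : g1 = (Multiset.map (fun a => X - C a) g1.roots).prod :=
    hg1splits.eq_prod_roots_of_monic hg1monic
  set Bs : Finset F := g1.roots.toFinset with hBs
  have hBsprod : ∏ β ∈ Bs, (X - C β) = g1 := by
    rw [Finset.prod_eq_multiset_prod, hBs, Multiset.toFinset_val,
      Multiset.dedup_eq_self.mpr (nodup_roots hg1sep)]
    exact hg1prodm.symm
  have hroot : ∀ β ∈ Bs, β ^ (t - 1) + 1 = 0 := by
    intro β hβ
    have := (mem_roots'.mp (Multiset.mem_toFinset.mp hβ)).2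
    rw [IsRoot.def, hg1evalx] at this
    exact this
  have hβnot : ∀ β ∈ Bs, ∀ i, α i ≠ β := by
    intro β hβ i hcontra
    exact hαg i (by rw [hcontra]; exact hroot β hβ)
  -- Steps 4/5/6 : local moments at each root vanish up to order q
  have hq1 : (1 : ℕ) ≤ q - 1 := by omega
  have hWβ : ∀ β ∈ Bs, ∀ k, 1 ≤ k → k ≤ q → ∑ i, A i * ((α i - β)⁻¹) ^ k = 0 := by
    intro β hβ k hk1 hkq
    have hdvdβ : (X - C β) ^ (q - 1) ∣ goppaSum α c := by
      refine dvd_trans ?_ hyp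
      exact pow_dvd_pow_of_dvd (dvd_iff_isRoot.mpr (by
        rw [IsRoot.def, hg1evalx]; exact hroot β hβ)) (q - 1)
    rw [hSdef] at hdvdβ
    have hM := (moment_crit α A β (hβnot β hβ) (q - 1)).mp hdvdβ
    rcases Nat.lt_or_ge k q with hk | hk
    · exact hM k hk1 (by omega)
    · have hkk : k = q := by omega
      rw [hkk]
      have hW1 : ∑ i, A i * ((α i - β)⁻¹) ^ 1 = 0 := hM 1 le_rfl hq1
      set ψ := iterateFrobenius F p (e : ℕ) with hψ
      have hψx : ∀ x : F, ψ x = x ^ q := by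
        intro x; rw [hψ, iterateFrobenius_def, ← hqval]
      have hψA : ∀ i, ψ (A i) = A i := by
        intro i
        rw [hψx, hA]
        rw [← map_pow, ← hq, FiniteField.pow_card]
      calc ∑ i, A i * ((α i - β)⁻¹) ^ q
          = ∑ i, ψ (A i * ((α i - β)⁻¹) ^ 1) := by
            refine sum_congr rfl fun i _ => ?_
            rw [map_mul, hψA i, hψx, pow_one]
        _ = ψ (∑ i, A i * ((α i - β)⁻¹) ^ 1) := (map_sum ψ _ _).symm
        _ = 0 := by rw [hW1, map_zero]
  have hdvd6 : ∀ β ∈ Bs, (X - C β) ^ q ∣ goppaSum α c := by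
    intro β hβ
    rw [hSdef]
    exact (moment_crit α A β (hβnot β hβ) q).mpr (hWβ β hβ)
  have hdvd7 : g1 ^ q ∣ goppaSum α c := by
    rw [← hBsprod, ← Finset.prod_pow]
    refine Finset.prod_dvd_of_coprime ?_ (fun β hβ => hdvd6 β hβ)
    intro a ha b hb hab
    refine IsCoprime.pow ?_
    refine isCoprime_X_sub_C_of_eval_ne (β := a) (g := X - C b) ?_
    simp only [eval_sub, eval_X, eval_C]
    exact sub_ne_zero_of_ne hab
  -- Step 8 : window of global moments
  have hg1qmonic : (g1 ^ q).Monic := hg1monic.pow q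
  have hg1qdeg : (g1 ^ q).natDegree = q * (t - 1) := by
    rw [natDegree_pow, hg1deg]
  have hg1qne : ∀ i, (g1 ^ q).eval (α i) ≠ 0 := by
    intro i
    rw [eval_pow, hg1evalx]
    exact pow_ne_zero q (hαg i)
  have hX1pos : (1 : ℕ) ≤ q * (t - 1) := Nat.mul_pos (by omega) (by omega)
  have hdvd7' : g1 ^ q ∣ ∑ i, C (A i) * ∏ j ∈ univ.erase i, (X - C (α j)) := by
    rw [← hSdef]; exact hdvd7
  have hWin := moment_window α A (g1 ^ q) hg1qmonic (by omega) hg1qne hdvd7'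
  have hevalg1q : ∀ i, (g1 ^ q).eval (α i) = ((α i) ^ (t - 1) + 1) ^ q := by
    intro i; rw [eval_pow, hg1evalx]
  set Gm : ℕ → F := fun a => ∑ i, A i * (α i) ^ a * (((α i) ^ (t - 1) + 1) ^ q)⁻¹ with hGm
  have hWin' : ∀ a, a < q * (t - 1) → Gm a = 0 := by
    intro a haa
    have h0 := hWin a (by rw [hg1qdeg]; exact haa)
    rw [hGm]
    calc (∑ i, A i * (α i) ^ a * (((α i) ^ (t - 1) + 1) ^ q)⁻¹)
        = ∑ i, A i * (α i) ^ a * ((g1 ^ q).eval (α i))⁻¹ :=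
          sum_congr rfl fun i _ => by rw [hevalg1q i]
      _ = 0 := h0
  -- basic powers
  have htt : t ≤ t * t := Nat.le_mul_of_pos_right t (by omega)
  have hαpow1 : ∀ i, (α i) ^ (t * t - 1) = 1 := by
    intro i
    have h0 := FiniteField.pow_card_sub_one_eq_one (α i) (hα0 i)
    rwa [hcard] at h0
  have hGshift : ∀ a, Gm (a + (t * t - 1)) = Gm a := by
    intro a
    refine sum_congr rfl fun i _ => ?_
    rw [pow_add, hαpow1 i, mul_one]
  have hGshiftIter : ∀ r a, Gm (a + r * (t * t - 1)) = Gm a := by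
    intro r
    induction r with
    | zero => intro a; simp
    | succ r IH =>
      intro a
      have h0 : a + (r + 1) * (t * t - 1) = (a + r * (t * t - 1)) + (t * t - 1) := by ring
      rw [h0, hGshift, IH]
  -- Frobenius x ↦ x^t
  set φ := iterateFrobenius F p ((e : ℕ) * l) with hφ
  have hφx : ∀ x : F, φ x = x ^ t := by
    intro x; rw [hφ, iterateFrobenius_def, ← htval]
  have hφA : ∀ i, φ (A i) = A i := by
    intro i
    rw [hφx, hA]
    have h0 : (c i) ^ t = c i := by
      rw [ht, ← hq]
      exact FiniteField.pow_card_pow l (c i)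
    rw [← map_pow, h0]
  have hexp1 : (t - 1) + t * (t - 1) = t * t - 1 := by
    zify [show 1 ≤ t by omega, show 1 ≤ t * t by omega]
    ring
  have hkeyid : ∀ i, (α i) ^ (t - 1) * ((α i) ^ (t * (t - 1)) + 1) = (α i) ^ (t - 1) + 1 := by
    intro i
    rw [mul_add, mul_one, ← pow_add, hexp1, hαpow1 i, add_comm]
  have hBinv : ∀ i, (((α i) ^ (t * (t - 1)) + 1) ^ q)⁻¹
      = (α i) ^ (q * (t - 1)) * ((((α i) ^ (t - 1) + 1)) ^ q)⁻¹ := by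
    intro i
    have h1 : ((α i) ^ (t - 1)) ^ q * ((α i) ^ (t * (t - 1)) + 1) ^ q
        = (((α i) ^ (t - 1) + 1)) ^ q := by
      rw [← mul_pow, hkeyid i]
    have h3 : (α i) ^ (q * (t - 1)) = ((α i) ^ (t - 1)) ^ q := by
      rw [← pow_mul, Nat.mul_comm]
    have h2 : ((α i) ^ (t * (t - 1)) + 1) ^ q
        * ((α i) ^ (q * (t - 1)) * ((((α i) ^ (t - 1) + 1)) ^ q)⁻¹) = 1 := by
      rw [h3]
      calc ((α i) ^ (t * (t - 1)) + 1) ^ q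
            * (((α i) ^ (t - 1)) ^ q * ((((α i) ^ (t - 1) + 1)) ^ q)⁻¹)
          = (((α i) ^ (t - 1)) ^ q * ((α i) ^ (t * (t - 1)) + 1) ^ q)
            * ((((α i) ^ (t - 1) + 1)) ^ q)⁻¹ := by ring
        _ = 1 := by rw [h1]; exact mul_inv_cancel₀ (pow_ne_zero _ (hαg i))
    exact inv_eq_of_mul_eq_one_right h2
  have hGfrob : ∀ a, Gm (t * a + q * (t - 1)) = (Gm a) ^ t := by
    intro a
    have h0 : (Gm a) ^ t = φ (Gm a) := (hφx _).symm
    rw [h0, hGm, map_sum]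
    refine sum_congr rfl fun i _ => ?_
    rw [map_mul, map_mul, hφA i, map_pow, map_inv₀, map_pow, map_add, map_pow, map_one,
      hφx (α i)]
    rw [← pow_mul (α i) t (t - 1), hBinv i, ← pow_mul (α i) t a]
    rw [pow_add (α i) (t * a) (q * (t - 1))]
    ring
  -- Step 9 : the inverse moments at 0 vanish
  have hW0 : ∀ k, 1 ≤ k → k ≤ q - 1 → ∑ i, A i * ((α i - 0)⁻¹) ^ k = 0 := by
    intro k hk1 hk2
    have hq1' : q ≤ q * (t - 1) := Nat.le_mul_of_pos_right q (by omega)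
    have hkX1 : k ≤ q * (t - 1) := by omega
    have hkTT : k + 1 ≤ t * t := by omega
    have htkX1 : t * k ≤ q * (t - 1) := by
      have h1 : t * k ≤ t * (q - 1) := Nat.mul_le_mul_left t hk2
      have h2 : t * (q - 1) ≤ q * (t - 1) := by
        zify [show 1 ≤ q by omega, show 1 ≤ t by omega]
        nlinarith
      omega
    have htk1 : 1 ≤ t * k := Nat.mul_pos (by omega) (by omega)
    -- second piece : Gm (t*t - 1 - k) = 0
    have ha0 : q * (t - 1) - t * k < q * (t - 1) := by omega
    have hG0 : Gm (q * (t - 1) - t * k) = 0 := hWin' _ ha0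
    have hGt0 : Gm (t * (q * (t - 1) - t * k) + q * (t - 1)) = 0 := by
      rw [hGfrob, hG0]
      exact zero_pow (by omega)
    have hidx : t * (q * (t - 1) - t * k) + q * (t - 1)
        = (t * t - 1 - k) + (q - 1 - k) * (t * t - 1) := by
      zify [htkX1, hk2, show 1 ≤ q by omega, show 1 ≤ t by omega, show 1 ≤ t * t by omega,
        show k ≤ t * t - 1 by omega]
      ring
    rw [hidx, hGshiftIter] at hGt0
    -- first piece : Gm ((t*t - 1 - k) + q*(t-1)) = 0
    have hG1 : Gm ((t * t - 1 - k) + q * (t - 1)) = 0 := by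
      have hidx2 : (t * t - 1 - k) + q * (t - 1) = (q * (t - 1) - k) + (t * t - 1) := by
        omega
      rw [hidx2, hGshift]
      exact hWin' _ (by omega)
    -- assemble
    have hconv : ∀ i : Fin n, A i * ((α i - 0)⁻¹) ^ k
        = A i * (α i) ^ ((t * t - 1 - k) + q * (t - 1)) * (((α i) ^ (t - 1) + 1) ^ q)⁻¹
          + A i * (α i) ^ (t * t - 1 - k) * (((α i) ^ (t - 1) + 1) ^ q)⁻¹ := by
      intro i
      have e1 : (α i) ^ (t * t - 1 - k) * (α i) ^ k = 1 := by
        rw [← pow_add, show t * t - 1 - k + k = t * t - 1 by omega, hαpow1 i]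
      have e2 : ((α i - 0)⁻¹) ^ k = (α i) ^ (t * t - 1 - k) := by
        rw [sub_zero, inv_pow]
        exact (eq_inv_of_mul_eq_one_left e1).symm
      have e3 : ((α i) ^ (t - 1) + 1) ^ q = (α i) ^ (q * (t - 1)) + 1 := by
        rw [hqval, add_pow_char_pow, one_pow, ← pow_mul, ← hqval, Nat.mul_comm]
      have e4 : ((α i) ^ (t - 1) + 1) ^ q * (((α i) ^ (t - 1) + 1) ^ q)⁻¹ = 1 :=
        mul_inv_cancel₀ (pow_ne_zero _ (hαg i))
      calc A i * ((α i - 0)⁻¹) ^ k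
          = A i * (α i) ^ (t * t - 1 - k) := by rw [e2]
        _ = A i * (α i) ^ (t * t - 1 - k)
              * (((α i) ^ (t - 1) + 1) ^ q * (((α i) ^ (t - 1) + 1) ^ q)⁻¹) := by
            rw [e4, mul_one]
        _ = A i * ((α i) ^ (t * t - 1 - k) * ((α i) ^ (q * (t - 1)) + 1))
              * (((α i) ^ (t - 1) + 1) ^ q)⁻¹ := by rw [e3]; ring
        _ = _ := by
            rw [mul_add, mul_one, ← pow_add]
            ring
    calc (∑ i, A i * ((α i - 0)⁻¹) ^ k)
        = Gm ((t * t - 1 - k) + q * (t - 1)) + Gm (t * t - 1 - k) := by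
          rw [hGm]
          rw [sum_congr rfl fun i _ => hconv i, sum_add_distrib]
      _ = 0 := by rw [hG1, hGt0, add_zero]
  -- Step 10 : X^(q-1) divides the syndrome
  have hdvdX : (X : F[X]) ^ (q - 1) ∣ goppaSum α c := by
    have h0 := (moment_crit α A 0 hα0 (q - 1)).mpr hW0
    rw [hSdef]
    have h1 : (X : F[X]) - C 0 = X := by rw [C_0, sub_zero]
    rwa [h1] at h0
  -- Step 11 : conclude
  have hg10 : g1.eval 0 ≠ 0 := by
    rw [hg1evalx, zero_pow (show t - 1 ≠ 0 by omega), zero_add]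
    exact one_ne_zero
  have hcopXg1 : IsCoprime ((X : F[X]) ^ (q - 1)) (g1 ^ (q - 1)) := by
    refine IsCoprime.pow ?_
    have h0 : IsCoprime ((X : F[X]) - C 0) g1 := isCoprime_X_sub_C_of_eval_ne hg10
    rwa [C_0, sub_zero] at h0
  rw [hT, mul_pow]
  exact hcopXg1.mul_dvd hdvdX hyp
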